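/- Suppose P(R = 0) > 0 and P(R = 1 | X, D) > 0 almost surely, and let m_C(η, X, D) := P(V_C < η | X, D, R = 1) be the true conditional distribution function of the score on the responders. Then, under Assumption 2 (MAR) and Assumption 3 (overlap), for every η ∈ ℝ and every measurable function π : ℝ^k × {0,1} → ℝ bounded below by a positive constant: P(V_C < η | R = 0) = 1 − γ + E[ ψ_C(η; m_C, π) ] / P(R = 0), where ψ_C(η; m, π) := (1 − R)·(m(η, X, D) − (1 − γ)) + (R / π(X, D))·(1{V_C < η} − m(η, X, D)). -/

import Mathlib

open MeasureTheory ProbabilityTheory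
open scoped ENNReal

/-- double-robust coverage, correct conditional CDF: under MAR and overlap,
with the true conditional score distribution `m_C(η,X,D) = P(V_C < η | X, D, R = 1)`,
for every `η` and every measurable `π` bounded below by a positive constant:
`P(V_C < η | R = 0) = 1 − γ + E[ψ_C(η; m_C, π)] / P(R = 0)`, where
`ψ_C(η; m, π) = (1−R)(m(η,X,D) − (1−γ)) + (R/π(X,D))(1{V_C<η} − m(η,X,D))`. -/
lemma aux_main
    {Ω α β : Type*} [mΩ : MeasurableSpace Ω] [StandardBorelSpace Ω]
    [mα : MeasurableSpace α] [mβ : MeasurableSpace β]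
    (P : Measure Ω) [IsProbabilityMeasure P]
    (Z : Ω → α) (Yp : Ω → β) (R : Ω → ℝ)
    (hZ : Measurable Z) (hYp : Measurable Yp) (hR : Measurable R)
    (hRbin : ∀ ω, R ω = 0 ∨ R ω = 1)
    (hA2 : CondIndepFun (MeasurableSpace.comap Z inferInstance) hZ.comap_le Yp R P)
    (V : Ω → ℝ) (u : α × β → ℝ) (hu : Measurable u) (hV : V = fun ω => u (Z ω, Yp ω))
    (hpos : 0 < P {ω | R ω = 0})
    (ε : α → ℝ) (hεmeas : Measurable ε)
    (hε : (fun ω => ε (Z ω)) =ᵐ[P]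
      MeasureTheory.condExp (MeasurableSpace.comap Z inferInstance) P
        (Set.indicator {ω' | R ω' = 1} (fun _ => (1 : ℝ))))
    (c : ℝ) (hc : 0 < c) (hov : ∀ᵐ ω ∂P, c < ε (Z ω) ∧ ε (Z ω) < 1 - c)
    (γ η : ℝ)
    (mf : α → ℝ) (hmf : Measurable mf) (hmfb : ∀ x, mf x ∈ Set.Icc (0 : ℝ) 1)
    (hmC : (fun ω => mf (Z ω)) =ᵐ[P[|{ω' | R ω' = 1}]]
      MeasureTheory.condExp (MeasurableSpace.comap Z inferInstance) (P[|{ω' | R ω' = 1}])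
        (Set.indicator {ω' | V ω' < η} (fun _ => (1 : ℝ))))
    (πf : α → ℝ) (hπf : Measurable πf) (cπ : ℝ) (hcπ : 0 < cπ) (hπc : ∀ x, cπ ≤ πf x) :
    (P[|{ω | R ω = 0}] {ω | V ω < η}).toReal =
      1 - γ +
        (∫ ω, ((1 - R ω) * (mf (Z ω) - (1 - γ)) +
            (R ω / πf (Z ω)) *
              ((if V ω < η then (1 : ℝ) else 0) - mf (Z ω))) ∂P) /
          (P {ω | R ω = 0}).toReal := by
  classical
  have hG : MeasurableSpace.comap Z mα ≤ mΩ := hZ.comap_le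
  have hVm : Measurable V := by rw [hV]; exact hu.comp (hZ.prodMk hYp)
  set B : Set Ω := {ω | R ω = 1} with hBdef
  set S0 : Set Ω := {ω | R ω = 0} with hS0def
  have hB : MeasurableSet B := hR (measurableSet_singleton 1)
  have hS0 : MeasurableSet S0 := hR (measurableSet_singleton 0)
  have hS0c : S0 = Bᶜ := by
    ext ω; rcases hRbin ω with h | h <;> simp [hBdef, hS0def, h]
  set AV : Set Ω := {ω | V ω < η} with hAVdef
  have hAV : MeasurableSet AV := measurableSet_lt hVm measurable_const
  set RI : Ω → ℝ := B.indicator (fun _ => (1:ℝ)) with hRIdef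
  have hRIR : RI = R := by
    funext ω; rcases hRbin ω with h | h <;>
      simp [hRIdef, Set.indicator_apply, hBdef, h]
  set fI : Ω → ℝ := AV.indicator (fun _ => (1:ℝ)) with hfIdef
  set e : Ω → ℝ := fun ω => ε (Z ω) with hedef
  set m : Ω → ℝ := fun ω => mf (Z ω) with hmdef
  have hZG : Measurable[mα.comap Z] Z := measurable_iff_comap_le.mpr le_rfl
  have heG : Measurable[mα.comap Z] e := hεmeas.comp hZG
  have hmG : Measurable[mα.comap Z] m := hmf.comp hZG
  have hπG : Measurable[mα.comap Z] (fun ω => πf (Z ω)) := hπf.comp hZG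
  have hIntfI : Integrable fI P := (integrable_const 1).indicator hAV
  have hIntRI : Integrable RI P := (integrable_const 1).indicator hB
  have hIntR : Integrable R P := hRIR ▸ hIntRI
  have heInt : Integrable e P := integrable_condExp.congr hε.symm
  set q : Ω → ℝ := MeasureTheory.condExp (mα.comap Z) P fI with hqdef
  -- σ-algebra H generated by (Z, Yp)
  set W : Ω → α × β := fun ω => (Z ω, Yp ω) with hWdef
  have hWm : Measurable W := hZ.prodMk hYp
  have hH : (Prod.instMeasurableSpace : MeasurableSpace (α × β)).comap W ≤ mΩ := hWm.comap_le
  have hGH : mα.comap Z ≤ (Prod.instMeasurableSpace : MeasurableSpace (α × β)).comap W := by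
    have h1 : Z = Prod.fst ∘ W := rfl
    calc mα.comap Z = (mα.comap Prod.fst).comap W := by
          rw [MeasurableSpace.comap_comp, ← h1]
      _ ≤ _ := MeasurableSpace.comap_mono measurable_fst.comap_le
  have hAVH : MeasurableSet[(Prod.instMeasurableSpace : MeasurableSpace (α × β)).comap W] AV := by
    refine ⟨u ⁻¹' Set.Iio η, hu measurableSet_Iio, ?_⟩
    ext ω
    simp [hWdef, hAVdef, hV, Set.mem_preimage, Set.mem_Iio]
  -- basic positivity facts
  have hintRI_eq : ∫ ω, RI ω ∂P = (P B).toReal := by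
    rw [hRIdef, integral_indicator hB, setIntegral_const, smul_eq_mul, mul_one, measureReal_def]
  have heavg : ∫ ω, e ω ∂P = (P B).toReal := by
    rw [integral_congr_ae hε, integral_condExp hG, hintRI_eq]
  have hc_le : c ≤ ∫ ω, e ω ∂P := by
    have h := integral_mono_ae (integrable_const c) heInt (hov.mono fun ω h => le_of_lt h.1)
    simpa using h
  have hPBpos : 0 < (P B).toReal := lt_of_lt_of_le hc (heavg ▸ hc_le)
  have hPB0 : P B ≠ 0 := by
    intro h; rw [h] at hPBpos; simp at hPBpos
  have hPBtop : P B ≠ ⊤ := measure_ne_top _ _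
  have he_nn : 0 ≤ᵐ[P] e := hov.mono fun ω h => (hc.trans h.1).le
  -- the key conditional-independence integral identity
  have hpreB : R ⁻¹' {1} = B := by ext ω; simp [hBdef]
  have hCI := (condIndepFun_iff_condExp_inter_preimage_eq_mul hYp hR).mp hA2
  have hsetint : ∀ T : Set (α × β), MeasurableSet T →
      ∫ ω in W ⁻¹' T, e ω ∂P = ∫ ω in W ⁻¹' T, RI ω ∂P := by
    have hrect : ∀ (T1 : Set α) (T2 : Set β), MeasurableSet T1 → MeasurableSet T2 →
        (P ((Z ⁻¹' T1 ∩ Yp ⁻¹' T2) ∩ B)).toReal = ∫ ω in Z ⁻¹' T1 ∩ Yp ⁻¹' T2, e ω ∂P := by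
      intro T1 T2 hT1 hT2
      have hAmG : MeasurableSet[mα.comap Z] (Z ⁻¹' T1) := ⟨T1, hT1, rfl⟩
      have hAm : MeasurableSet (Z ⁻¹' T1) := hZ hT1
      have hC2 : MeasurableSet (Yp ⁻¹' T2) := hYp hT2
      have h1 := hCI T2 {1} hT2 (measurableSet_singleton 1)
      rw [hpreB] at h1
      have hIntC2B : Integrable ((Yp ⁻¹' T2 ∩ B).indicator fun _ => (1:ℝ)) P :=
        (integrable_const 1).indicator (hC2.inter hB)
      have hIntC2 : Integrable ((Yp ⁻¹' T2).indicator fun _ => (1:ℝ)) P :=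
        (integrable_const 1).indicator hC2
      have hIntmul : Integrable (e * (Yp ⁻¹' T2).indicator fun _ => (1:ℝ)) P := by
        refine heInt.norm.mono' ?_ (ae_of_all _ fun ω => ?_)
        · exact ((heG.mono hG le_rfl).mul
            (measurable_const.indicator hC2)).aestronglyMeasurable
        · by_cases h : ω ∈ Yp ⁻¹' T2 <;>
            simp [h, Set.indicator_apply, abs_nonneg, Real.norm_eq_abs]
      have hpull : MeasureTheory.condExp (mα.comap Z) P (e * (Yp ⁻¹' T2).indicator fun _ => (1:ℝ))
          =ᵐ[P] e * MeasureTheory.condExp (mα.comap Z) P ((Yp ⁻¹' T2).indicator fun _ => (1:ℝ)) :=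
        condExp_mul_of_stronglyMeasurable_left heG.stronglyMeasurable hIntmul hIntC2
      calc (P ((Z ⁻¹' T1 ∩ Yp ⁻¹' T2) ∩ B)).toReal
          = ∫ ω in Z ⁻¹' T1, ((Yp ⁻¹' T2 ∩ B).indicator fun _ => (1:ℝ)) ω ∂P := by
            rw [setIntegral_indicator (hC2.inter hB), setIntegral_const, smul_eq_mul, mul_one, measureReal_def,
              Set.inter_assoc]
        _ = ∫ ω in Z ⁻¹' T1,
              (MeasureTheory.condExp (mα.comap Z) P ((Yp ⁻¹' T2 ∩ B).indicator fun _ => (1:ℝ))) ω ∂P :=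
            (setIntegral_condExp hG hIntC2B hAmG).symm
        _ = ∫ ω in Z ⁻¹' T1,
              (e * MeasureTheory.condExp (mα.comap Z) P ((Yp ⁻¹' T2).indicator fun _ => (1:ℝ))) ω ∂P := by
            refine setIntegral_congr_ae hAm ?_
            filter_upwards [h1, hε] with ω h h' _
            rw [h]
            simp only [Pi.mul_apply]
            rw [← h', mul_comm]
        _ = ∫ ω in Z ⁻¹' T1,
              (MeasureTheory.condExp (mα.comap Z) P (e * (Yp ⁻¹' T2).indicator fun _ => (1:ℝ))) ω ∂P := by
            refine setIntegral_congr_ae hAm ?_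
            filter_upwards [hpull] with ω h _
            rw [h]
        _ = ∫ ω in Z ⁻¹' T1, (e * (Yp ⁻¹' T2).indicator fun _ => (1:ℝ)) ω ∂P :=
            setIntegral_condExp hG hIntmul hAmG
        _ = ∫ ω in Z ⁻¹' T1, (Yp ⁻¹' T2).indicator e ω ∂P := by
            refine setIntegral_congr_ae hAm (ae_of_all _ fun ω _ => ?_)
            by_cases h : ω ∈ Yp ⁻¹' T2 <;> simp [h, Set.indicator_apply]
        _ = ∫ ω in Z ⁻¹' T1 ∩ Yp ⁻¹' T2, e ω ∂P := setIntegral_indicator hC2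
    intro T hT
    set g : Ω → ℝ≥0∞ := fun ω => ENNReal.ofReal (e ω) with hgdef
    have hgm : Measurable g := ENNReal.measurable_ofReal.comp (heG.mono hG le_rfl)
    have hWT : MeasurableSet (W ⁻¹' T) := hWm hT
    have hlint : ∫⁻ ω, g ω ∂P = ENNReal.ofReal (∫ ω, e ω ∂P) :=
      (ofReal_integral_eq_lintegral_ofReal heInt he_nn).symm
    haveI hfin2 : IsFiniteMeasure (P.withDensity g) :=
      isFiniteMeasure_withDensity (by rw [hlint]; exact ENNReal.ofReal_ne_top)
    have hμeq : (P.restrict B).map W = (P.withDensity g).map W := by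
      haveI : IsFiniteMeasure ((P.restrict B).map W) := Measure.isFiniteMeasure_map _ _
      refine ext_of_generate_finite _ generateFrom_prod.symm isPiSystem_prod ?_ ?_
      · rintro s ⟨T1, hT1, T2, hT2, rfl⟩
        have hWpre : W ⁻¹' (T1 ×ˢ T2) = Z ⁻¹' T1 ∩ Yp ⁻¹' T2 := by
          ext ω; simp [hWdef]
        rw [Measure.map_apply hWm (hT1.prod hT2), Measure.map_apply hWm (hT1.prod hT2),
          Measure.restrict_apply (hWm (hT1.prod hT2)), withDensity_apply _ (hWm (hT1.prod hT2)),
          hWpre]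
        have h3 : ∫⁻ ω in Z ⁻¹' T1 ∩ Yp ⁻¹' T2, g ω ∂P
            = ENNReal.ofReal (∫ ω in Z ⁻¹' T1 ∩ Yp ⁻¹' T2, e ω ∂P) :=
          (ofReal_integral_eq_lintegral_ofReal heInt.integrableOn (ae_restrict_of_ae he_nn)).symm
        rw [h3, ← hrect T1 T2 hT1 hT2, ENNReal.ofReal_toReal (measure_ne_top _ _)]
      · rw [Measure.map_apply hWm MeasurableSet.univ, Measure.map_apply hWm MeasurableSet.univ]
        simp only [Set.preimage_univ]
        rw [Measure.restrict_apply MeasurableSet.univ, Set.univ_inter,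
          withDensity_apply _ MeasurableSet.univ, Measure.restrict_univ, hlint, heavg,
          ENNReal.ofReal_toReal hPBtop]
    have h4 : P.restrict B (W ⁻¹' T) = P.withDensity g (W ⁻¹' T) := by
      rw [← Measure.map_apply hWm hT, hμeq, Measure.map_apply hWm hT]
    have hRHS : ∫ ω in W ⁻¹' T, RI ω ∂P = (P (W ⁻¹' T ∩ B)).toReal := by
      rw [hRIdef, setIntegral_indicator hB, setIntegral_const, smul_eq_mul, mul_one, measureReal_def]
    have hLHS : ∫ ω in W ⁻¹' T, e ω ∂P = ((P.withDensity g) (W ⁻¹' T)).toReal := by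
      rw [withDensity_apply _ hWT,
        ← ofReal_integral_eq_lintegral_ofReal heInt.integrableOn (ae_restrict_of_ae he_nn),
        ENNReal.toReal_ofReal
          (integral_nonneg_of_ae (ae_restrict_of_ae he_nn))]
    rw [hLHS, hRHS, ← h4, Measure.restrict_apply hWT]
  have hstar : e =ᵐ[P] MeasureTheory.condExp
      ((Prod.instMeasurableSpace : MeasurableSpace (α × β)).comap W) P RI := by
    refine ae_eq_condExp_of_forall_setIntegral_eq hH hIntRI
      (fun s _ _ => heInt.integrableOn) ?_ ?_
    · rintro s ⟨T, hT, rfl⟩ -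
      exact hsetint T hT
    · exact StronglyMeasurable.aestronglyMeasurable ((heG.mono hGH le_rfl).stronglyMeasurable)
  -- Step C : condexp G (fI * R) = e * q
  have hfI01 : ∀ ω, fI ω = 0 ∨ fI ω = 1 := fun ω => by
    by_cases h : ω ∈ AV <;> simp [hfIdef, Set.indicator_apply, h]
  have hfIm : Measurable fI := measurable_const.indicator hAV
  have hIntfIR : Integrable (fI * R) P := by
    refine (integrable_const (1:ℝ)).mono' (hfIm.mul hR).aestronglyMeasurable
      (ae_of_all _ fun ω => ?_)
    rcases hfI01 ω with h | h <;> rcases hRbin ω with h2 | h2 <;>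
      simp [h, h2, Pi.mul_apply]
  have hfIH : StronglyMeasurable[(Prod.instMeasurableSpace : MeasurableSpace (α × β)).comap W] fI :=
    stronglyMeasurable_const.indicator hAVH
  have hRe : MeasureTheory.condExp
      ((Prod.instMeasurableSpace : MeasurableSpace (α × β)).comap W) P R =ᵐ[P] e := by
    rw [← hRIR]; exact hstar.symm
  have hCd : MeasureTheory.condExp (mα.comap Z) P (fI * R) =ᵐ[P] e * q := by
    have h1 : MeasureTheory.condExp ((Prod.instMeasurableSpace : MeasurableSpace (α × β)).comap W)
        P (fI * R) =ᵐ[P] fI * MeasureTheory.condExp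
          ((Prod.instMeasurableSpace : MeasurableSpace (α × β)).comap W) P R :=
      condExp_mul_of_stronglyMeasurable_left hfIH hIntfIR hIntR
    have h2 : MeasureTheory.condExp ((Prod.instMeasurableSpace : MeasurableSpace (α × β)).comap W)
        P (fI * R) =ᵐ[P] e * fI :=
      h1.trans (hRe.mono fun ω h => by simp only [Pi.mul_apply] at *; rw [h, mul_comm])
    have h3 := MeasureTheory.condExp_condExp_of_le (μ := P) (f := fI * R) hGH hH
    have hIntefI : Integrable (e * fI) P := by
      refine heInt.norm.mono' ((heG.mono hG le_rfl).mul hfIm).aestronglyMeasurable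
        (ae_of_all _ fun ω => ?_)
      rcases hfI01 ω with h | h <;>
        simp [h, Pi.mul_apply, Real.norm_eq_abs, abs_nonneg, le_abs_self]
    have h5 : MeasureTheory.condExp (mα.comap Z) P (e * fI) =ᵐ[P] e * q :=
      condExp_mul_of_stronglyMeasurable_left heG.stronglyMeasurable hIntefI hIntfI
    calc MeasureTheory.condExp (mα.comap Z) P (fI * R)
        =ᵐ[P] MeasureTheory.condExp (mα.comap Z) P
          (MeasureTheory.condExp ((Prod.instMeasurableSpace : MeasurableSpace (α × β)).comap W)
            P (fI * R)) := h3.symm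
      _ =ᵐ[P] MeasureTheory.condExp (mα.comap Z) P (e * fI) := condExp_congr_ae h2
      _ =ᵐ[P] e * q := h5
  -- Step D : m = q a.e.
  haveI hPBprob : IsProbabilityMeasure (P[|B]) := cond_isProbabilityMeasure hPB0
  have hcondint : ∀ (h : Ω → ℝ) (A : Set Ω), MeasurableSet A →
      ∫ ω in A, h ω ∂(P[|B]) = (P B).toReal⁻¹ * ∫ ω in A ∩ B, h ω ∂P := by
    intro h A hA
    rw [ProbabilityTheory.cond, Measure.restrict_smul, Measure.restrict_restrict hA,
      integral_smul_measure, ENNReal.toReal_inv, smul_eq_mul]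
  have hIntmRI : Integrable (m * RI) P := by
    refine (integrable_const (1:ℝ)).mono'
      (((hmG.mono hG le_rfl).mul (measurable_const.indicator hB)).aestronglyMeasurable)
      (ae_of_all _ fun ω => ?_)
    have h1 := (hmfb (Z ω)).1
    have h2 := (hmfb (Z ω)).2
    by_cases h : ω ∈ B <;>
      simp only [Pi.mul_apply, hRIdef, Set.indicator_apply, h, if_pos, if_neg, mul_one, mul_zero,
        if_true, if_false, Real.norm_eq_abs, not_false_iff]
    · rw [abs_le]; exact ⟨by linarith, by linarith⟩
    · simp
  have hDi : ∀ A : Set Ω, MeasurableSet[mα.comap Z] A →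
      ∫ ω in A, (m * e) ω ∂P = ∫ ω in A, (fI * R) ω ∂P := by
    intro A hAG
    have hAm : MeasurableSet A := hG _ hAG
    have hpull : MeasureTheory.condExp (mα.comap Z) P (m * RI)
        =ᵐ[P] m * MeasureTheory.condExp (mα.comap Z) P RI :=
      condExp_mul_of_stronglyMeasurable_left hmG.stronglyMeasurable hIntmRI hIntRI
    have e1 : ∫ ω in A, (m * e) ω ∂P = ∫ ω in A, (m * RI) ω ∂P := by
      calc ∫ ω in A, (m * e) ω ∂P
          = ∫ ω in A, (m * MeasureTheory.condExp (mα.comap Z) P RI) ω ∂P := by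
            refine setIntegral_congr_ae hAm ?_
            filter_upwards [hε] with ω h _
            simp only [Pi.mul_apply]; rw [h]
        _ = ∫ ω in A, (MeasureTheory.condExp (mα.comap Z) P (m * RI)) ω ∂P := by
            refine setIntegral_congr_ae hAm ?_
            filter_upwards [hpull] with ω h _
            rw [h]
        _ = ∫ ω in A, (m * RI) ω ∂P := setIntegral_condExp hG hIntmRI hAG
    have e4 : ∫ ω in A, (m * RI) ω ∂P = ∫ ω in A ∩ B, m ω ∂P := by
      rw [show (m * RI) = B.indicator m from funext fun ω => by
        by_cases h : ω ∈ B <;> simp [hRIdef, Set.indicator_apply, h],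
        setIntegral_indicator hB]
    have e4' : ∫ ω in A, (fI * R) ω ∂P = ∫ ω in A ∩ B, fI ω ∂P := by
      rw [show (fI * R) = B.indicator fI from funext fun ω => by
        rw [← hRIR]
        by_cases h : ω ∈ B <;> simp [hRIdef, Set.indicator_apply, h],
        setIntegral_indicator hB]
    have hmid : ∫ ω in A ∩ B, m ω ∂P = ∫ ω in A ∩ B, fI ω ∂P := by
      have i1 : Integrable fI (P[|B]) := (integrable_const 1).indicator hAV
      have c1 : ∫ ω in A, m ω ∂(P[|B]) = ∫ ω in A, fI ω ∂(P[|B]) := by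
        calc ∫ ω in A, m ω ∂(P[|B])
            = ∫ ω in A, MeasureTheory.condExp (mα.comap Z) (P[|B]) fI ω ∂(P[|B]) := by
              refine setIntegral_congr_ae hAm ?_
              filter_upwards [hmC] with ω h _
              exact h
          _ = ∫ ω in A, fI ω ∂(P[|B]) := setIntegral_condExp hG i1 hAG
      rw [hcondint m A hAm, hcondint fI A hAm] at c1
      exact mul_left_cancel₀ (inv_ne_zero (ne_of_gt hPBpos)) c1
    rw [e1, e4, e4', hmid]
  have hDii : ∀ A : Set Ω, MeasurableSet[mα.comap Z] A →
      ∫ ω in A, (e * q) ω ∂P = ∫ ω in A, (fI * R) ω ∂P := by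
    intro A hAG
    rw [← setIntegral_condExp hG hIntfIR hAG]
    refine setIntegral_congr_ae (hG _ hAG) ?_
    filter_upwards [hCd] with ω h _
    exact h.symm
  have hIntme : Integrable (m * e) P := by
    refine heInt.norm.mono' ((hmG.mul heG).mono hG le_rfl).aestronglyMeasurable
      (ae_of_all _ fun ω => ?_)
    have h1 := (hmfb (Z ω)).1
    have h2 := (hmfb (Z ω)).2
    simp only [Pi.mul_apply, Real.norm_eq_abs, abs_mul]
    calc |m ω| * |e ω| ≤ 1 * |e ω| := by
          refine mul_le_mul_of_nonneg_right ?_ (abs_nonneg _)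
          rw [abs_le]; exact ⟨by linarith, by linarith⟩
      _ = |e ω| := one_mul _
  have hIntefI : Integrable (e * fI) P := by
    refine heInt.norm.mono' ((heG.mono hG le_rfl).mul hfIm).aestronglyMeasurable
      (ae_of_all _ fun ω => ?_)
    rcases hfI01 ω with h | h <;>
      simp [h, Pi.mul_apply, Real.norm_eq_abs, abs_nonneg, le_abs_self]
  have hInteq : Integrable (e * q) P :=
    integrable_condExp.congr
      (condExp_mul_of_stronglyMeasurable_left heG.stronglyMeasurable hIntefI hIntfI)
  have hme_eq : (m * e) =ᵐ[P] (e * q) := by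
    refine ae_eq_of_forall_setIntegral_eq_of_sigmaFinite' hG
      (fun s _ _ => hIntme.integrableOn) (fun s _ _ => hInteq.integrableOn)
      (fun s hs _ => (hDi s hs).trans (hDii s hs).symm)
      (StronglyMeasurable.aestronglyMeasurable (hmG.mul heG).stronglyMeasurable) ?_
    exact StronglyMeasurable.aestronglyMeasurable (heG.stronglyMeasurable.mul stronglyMeasurable_condExp)
  have hmq : m =ᵐ[P] q := by
    filter_upwards [hme_eq, hov] with ω h hov'
    have he0 : e ω ≠ 0 := ne_of_gt (hc.trans hov'.1)
    simp only [Pi.mul_apply] at h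
    exact mul_right_cancel₀ he0 (h.trans (mul_comm _ _))
  -- Step E : final computation
  have hfIif : ∀ ω, fI ω = if V ω < η then (1:ℝ) else 0 := fun ω => by
    by_cases h : V ω < η <;>
      simp [hfIdef, Set.indicator_apply, hAVdef, h, Set.mem_setOf_eq]
  have hS0pos : 0 < (P S0).toReal := ENNReal.toReal_pos (ne_of_gt hpos) (measure_ne_top _ _)
  -- I2 = 0
  set piInv : Ω → ℝ := fun ω => (πf (Z ω))⁻¹ with hpiInv
  have hrew : (fun ω => (R ω / πf (Z ω)) * (fI ω - m ω))
      = piInv * (fI * R - m * R) := by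
    funext ω
    simp only [Pi.mul_apply, Pi.sub_apply, hpiInv]
    rw [div_eq_mul_inv]; ring
  have hIntmR : Integrable (m * R) P := by rw [← hRIR]; exact hIntmRI
  have hIntfull : Integrable (piInv * (fI * R - m * R)) P := by
    refine (integrable_const (cπ⁻¹ * 2)).mono'
      (((hπG.inv.mono hG le_rfl).mul
        ((hfIm.mul hR).sub ((hmG.mono hG le_rfl).mul hR))).aestronglyMeasurable)
      (ae_of_all _ fun ω => ?_)
    have hp : 0 < πf (Z ω) := lt_of_lt_of_le hcπ (hπc (Z ω))
    have h1 : ‖piInv ω‖ ≤ cπ⁻¹ := by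
      rw [hpiInv, Real.norm_eq_abs, abs_of_nonneg (inv_nonneg.mpr hp.le)]
      exact inv_anti₀ hcπ (hπc (Z ω))
    have h2 : ‖(fI * R - m * R) ω‖ ≤ 2 := by
      simp only [Pi.sub_apply, Pi.mul_apply]
      have hb1 : |fI ω * R ω| ≤ 1 := by
        rcases hfI01 ω with h | h <;> rcases hRbin ω with h' | h' <;> simp [h, h']
      have hb2 : |m ω * R ω| ≤ 1 := by
        have hm1 := (hmfb (Z ω)).1
        have hm2 := (hmfb (Z ω)).2
        rcases hRbin ω with h' | h'
        · simp [h']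
        · rw [h', mul_one, abs_le]; exact ⟨by linarith, by linarith⟩
      calc ‖fI ω * R ω - m ω * R ω‖ ≤ ‖fI ω * R ω‖ + ‖m ω * R ω‖ := norm_sub_le _ _
        _ ≤ 2 := by rw [Real.norm_eq_abs, Real.norm_eq_abs]; linarith
    calc ‖(piInv * (fI * R - m * R)) ω‖ = ‖piInv ω‖ * ‖(fI * R - m * R) ω‖ := by
          simp [Pi.mul_apply, norm_mul]
      _ ≤ cπ⁻¹ * 2 := mul_le_mul h1 h2 (norm_nonneg _) (by positivity)
  have hcond0 : MeasureTheory.condExp (mα.comap Z) P (piInv * (fI * R - m * R)) =ᵐ[P] 0 := by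
    have hpullpi : MeasureTheory.condExp (mα.comap Z) P (piInv * (fI * R - m * R)) =ᵐ[P]
        piInv * MeasureTheory.condExp (mα.comap Z) P (fI * R - m * R) :=
      condExp_mul_of_stronglyMeasurable_left (hπG.inv.stronglyMeasurable) hIntfull (hIntfIR.sub hIntmR)
    have hsub := condExp_sub (μ := P) (m := mα.comap Z) hIntfIR hIntmR
    have hmRc : MeasureTheory.condExp (mα.comap Z) P (m * R) =ᵐ[P] e * q := by
      have hpullm : MeasureTheory.condExp (mα.comap Z) P (m * RI) =ᵐ[P]
          m * MeasureTheory.condExp (mα.comap Z) P RI :=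
        condExp_mul_of_stronglyMeasurable_left hmG.stronglyMeasurable hIntmRI hIntRI
      calc MeasureTheory.condExp (mα.comap Z) P (m * R)
          =ᵐ[P] m * MeasureTheory.condExp (mα.comap Z) P RI := by rw [← hRIR]; exact hpullm
        _ =ᵐ[P] m * e := by
            filter_upwards [hε] with ω h
            simp only [Pi.mul_apply]; rw [h]
        _ =ᵐ[P] e * q := hme_eq
    filter_upwards [hpullpi, hsub, hCd, hmRc] with ω h1' h2' h3' h4'
    rw [Pi.zero_apply, h1', Pi.mul_apply, h2']
    simp only [Pi.sub_apply]
    rw [h3', h4']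
    simp
  have hI2 : ∫ ω, (R ω / πf (Z ω)) * (fI ω - m ω) ∂P = 0 := by
    rw [hrew, ← integral_condExp hG (f := piInv * (fI * R - m * R)),
      integral_congr_ae hcond0]
    simp
  -- I1
  have hint1R : ∫ ω, (1 - R ω) ∂P = (P S0).toReal := by
    rw [show (fun ω => 1 - R ω) = S0.indicator (fun _ => (1:ℝ)) from funext fun ω => by
        rcases hRbin ω with h | h <;> simp [hS0def, Set.indicator_apply, h],
      integral_indicator hS0, setIntegral_const, smul_eq_mul, mul_one, measureReal_def]
  have hIntq_eq : ∫ ω, q ω ∂P = (P AV).toReal := by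
    rw [hqdef, integral_condExp hG, hfIdef, integral_indicator hAV, setIntegral_const,
      smul_eq_mul, mul_one, measureReal_def]
  have hfIR_eq : ∫ ω, (fI * R) ω ∂P = (P (AV ∩ B)).toReal := by
    rw [show fI * R = (AV ∩ B).indicator (fun _ => (1:ℝ)) from funext fun ω => by
        rw [← hRIR]
        by_cases h1 : ω ∈ AV <;> by_cases h2 : ω ∈ B <;>
          simp [hfIdef, hRIdef, Set.indicator_apply, h1, h2],
      integral_indicator (hAV.inter hB), setIntegral_const, smul_eq_mul, mul_one, measureReal_def]
  have hIntqRI : Integrable (q * RI) P := by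
    refine (integrable_condExp (μ := P) (f := fI) (m := mα.comap Z)).norm.mono'
      ((stronglyMeasurable_condExp.mono hG).aestronglyMeasurable.mul
        (measurable_const.indicator hB).aestronglyMeasurable)
      (ae_of_all _ fun ω => ?_)
    by_cases h : ω ∈ B <;>
      simp [Pi.mul_apply, hRIdef, Set.indicator_apply, h, Real.norm_eq_abs, abs_nonneg,
        le_abs_self, abs_mul, hqdef]
  have hIntqR : Integrable (q * R) P := by rw [← hRIR]; exact hIntqRI
  have hqR_eq : ∫ ω, (q * R) ω ∂P = ∫ ω, (fI * R) ω ∂P := by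
    have hpullq : MeasureTheory.condExp (mα.comap Z) P (q * RI) =ᵐ[P]
        q * MeasureTheory.condExp (mα.comap Z) P RI :=
      condExp_mul_of_stronglyMeasurable_left stronglyMeasurable_condExp hIntqRI hIntRI
    calc ∫ ω, (q * R) ω ∂P = ∫ ω, (q * RI) ω ∂P := by rw [hRIR]
      _ = ∫ ω, MeasureTheory.condExp (mα.comap Z) P (q * RI) ω ∂P := (integral_condExp hG).symm
      _ = ∫ ω, (e * q) ω ∂P := by
          refine integral_congr_ae ?_
          filter_upwards [hpullq, hε] with ω h h'
          rw [h]; simp only [Pi.mul_apply]; rw [← h', mul_comm]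
      _ = ∫ ω, MeasureTheory.condExp (mα.comap Z) P (fI * R) ω ∂P :=
          (integral_congr_ae hCd).symm
      _ = ∫ ω, (fI * R) ω ∂P := integral_condExp hG
  have hdiffAV : S0 ∩ AV = AV \ B := by
    rw [hS0c]; ext ω; simp [Set.mem_diff, Set.mem_inter_iff, and_comm]
  have hsplitAV : (P AV).toReal = (P (AV ∩ B)).toReal + (P (S0 ∩ AV)).toReal := by
    rw [hdiffAV, ← ENNReal.toReal_add (measure_ne_top _ _) (measure_ne_top _ _),
      measure_inter_add_diff AV hB]
  have hIntm1R : Integrable (fun ω => (1 - R ω) * m ω) P := by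
    refine (integrable_const (1:ℝ)).mono'
      ((measurable_const.sub hR).mul (hmG.mono hG le_rfl)).aestronglyMeasurable
      (ae_of_all _ fun ω => ?_)
    have hm1 := (hmfb (Z ω)).1
    have hm2 := (hmfb (Z ω)).2
    rcases hRbin ω with h | h
    · simp only [h, sub_zero, one_mul, Real.norm_eq_abs]
      rw [abs_le]; exact ⟨by linarith, by linarith⟩
    · simp [h]
  have hInt1mR : Integrable (fun ω => 1 - R ω) P := (integrable_const 1).sub hIntR
  have hI1 : ∫ ω, (1 - R ω) * (m ω - (1 - γ)) ∂P
      = (P (S0 ∩ AV)).toReal - (1 - γ) * (P S0).toReal := by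
    have hre : (fun ω => (1 - R ω) * (m ω - (1 - γ)))
        = fun ω => (1 - R ω) * m ω - (1 - γ) * (1 - R ω) := by
      funext ω; ring
    have hm1 : ∫ ω, (1 - R ω) * m ω ∂P = (P AV).toReal - (P (AV ∩ B)).toReal := by
      calc ∫ ω, (1 - R ω) * m ω ∂P = ∫ ω, (1 - R ω) * q ω ∂P := by
            refine integral_congr_ae ?_
            filter_upwards [hmq] with ω h
            rw [h]
        _ = ∫ ω, (q ω - (q * R) ω) ∂P := by
            refine integral_congr_ae (ae_of_all _ fun ω => ?_)
            simp only [Pi.mul_apply]; ring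
        _ = (∫ ω, q ω ∂P) - ∫ ω, (q * R) ω ∂P := integral_sub integrable_condExp hIntqR
        _ = (P AV).toReal - (P (AV ∩ B)).toReal := by rw [hIntq_eq, hqR_eq, hfIR_eq]
    rw [hre, integral_sub hIntm1R (hInt1mR.const_mul (1 - γ)), integral_const_mul, hint1R, hm1]
    linarith [hsplitAV]
  have hInt1 : Integrable (fun ω => (1 - R ω) * (m ω - (1 - γ))) P := by
    refine (integrable_const ((1:ℝ) + |1 - γ|)).mono'
      ((measurable_const.sub hR).mul
        ((hmG.mono hG le_rfl).sub measurable_const)).aestronglyMeasurable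
      (ae_of_all _ fun ω => ?_)
    have hm1 := (hmfb (Z ω)).1
    have hm2 := (hmfb (Z ω)).2
    have hb2 : ‖m ω - (1 - γ)‖ ≤ 1 + |1 - γ| := by
      calc ‖m ω - (1 - γ)‖ ≤ ‖m ω‖ + ‖(1 - γ)‖ := norm_sub_le _ _
        _ ≤ 1 + |1 - γ| := by
            rw [Real.norm_eq_abs, Real.norm_eq_abs]
            have : |m ω| ≤ 1 := by rw [abs_le]; exact ⟨by linarith, by linarith⟩
            linarith
    have hb1 : ‖1 - R ω‖ ≤ 1 := by rcases hRbin ω with h | h <;> simp [h]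
    calc ‖(1 - R ω) * (m ω - (1 - γ))‖ = ‖1 - R ω‖ * ‖m ω - (1 - γ)‖ := norm_mul _ _
      _ ≤ 1 * (1 + |1 - γ|) := mul_le_mul hb1 hb2 (norm_nonneg _) (by norm_num)
      _ = 1 + |1 - γ| := one_mul _
  have hInt2 : Integrable (fun ω => (R ω / πf (Z ω)) * (fI ω - m ω)) P := by
    rw [hrew]; exact hIntfull
  have hIeq : ∫ ω, ((1 - R ω) * (mf (Z ω) - (1 - γ)) +
      (R ω / πf (Z ω)) * ((if V ω < η then (1 : ℝ) else 0) - mf (Z ω))) ∂P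
      = (P (S0 ∩ AV)).toReal - (1 - γ) * (P S0).toReal := by
    have hgi : (fun ω => (1 - R ω) * (mf (Z ω) - (1 - γ)) +
        (R ω / πf (Z ω)) * ((if V ω < η then (1 : ℝ) else 0) - mf (Z ω)))
        = fun ω => (1 - R ω) * (m ω - (1 - γ)) + (R ω / πf (Z ω)) * (fI ω - m ω) := by
      funext ω; rw [← hfIif ω]
    rw [hgi, integral_add hInt1 hInt2, hI1, hI2, add_zero]
  rw [hIeq, ProbabilityTheory.cond_apply hS0, ENNReal.toReal_mul, ENNReal.toReal_inv]
  field_simp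
  ring

theorem stmt_6
    {Ω : Type*} [mΩ : MeasurableSpace Ω] [StandardBorelSpace Ω]
    (P : Measure Ω) [IsProbabilityMeasure P]
    {k : ℕ} (X : Ω → (Fin k → ℝ)) (Y1 Y0 D R : Ω → ℝ)
    (hX : Measurable X) (hY1 : Measurable Y1) (hY0 : Measurable Y0)
    (hD : Measurable D) (hR : Measurable R)
    (hDbin : ∀ ω, D ω = 0 ∨ D ω = 1) (hRbin : ∀ ω, R ω = 0 ∨ R ω = 1)
    -- Assumption 2 (MAR): (Y(1), Y(0)) ⟂ R | (X, D)
    (hA2 : CondIndepFun (MeasurableSpace.comap (fun ω => (X ω, D ω)) inferInstance)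
      (Measurable.comap_le (hX.prodMk hD))
      (fun ω => (Y1 ω, Y0 ω)) R P)
    -- nonconformity score V_C = v(X, D, Y(1), Y(0))
    (v : (Fin k → ℝ) × ℝ × ℝ × ℝ → ℝ) (hv : Measurable v)
    (V : Ω → ℝ) (hV : V = fun ω => v (X ω, D ω, Y1 ω, Y0 ω))
    (hpos : 0 < P {ω | R ω = 0})
    -- eR is (a version of) the response propensity P(R = 1 | X, D)
    (eR : (Fin k → ℝ) → ℝ → ℝ) (heRmeas : Measurable fun p : (Fin k → ℝ) × ℝ => eR p.1 p.2)
    (heR : (fun ω => eR (X ω) (D ω)) =ᵐ[P]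
      MeasureTheory.condExp (MeasurableSpace.comap (fun ω' => (X ω', D ω')) inferInstance) P
        (Set.indicator {ω' | R ω' = 1} (fun _ => (1 : ℝ))))
    -- Assumption 3 (overlap); in particular 0 < P(R = 1 | X, D) almost surely
    (hoverlap : ∃ c : ℝ, 0 < c ∧ ∀ᵐ ω ∂P, c < eR (X ω) (D ω) ∧ eR (X ω) (D ω) < 1 - c)
    (γ : ℝ) (hγ : γ ∈ Set.Ioo (0 : ℝ) 1)
    -- mC is (a version of) the true conditional CDF of V_C given (X, D) on the responders
    (mC : ℝ → (Fin k → ℝ) → ℝ → ℝ)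
    (hmCmeas : Measurable fun p : ℝ × (Fin k → ℝ) × ℝ => mC p.1 p.2.1 p.2.2)
    (hmCbdd : ∀ η x d, mC η x d ∈ Set.Icc (0 : ℝ) 1)
    (hmC : ∀ η : ℝ, (fun ω => mC η (X ω) (D ω)) =ᵐ[P[|{ω' | R ω' = 1}]]
      MeasureTheory.condExp (MeasurableSpace.comap (fun ω' => (X ω', D ω')) inferInstance)
        (P[|{ω' | R ω' = 1}])
        (Set.indicator {ω' | V ω' < η} (fun _ => (1 : ℝ))))
    -- π is measurable and bounded below by a positive constant
    (π : (Fin k → ℝ) → ℝ → ℝ) (hπmeas : Measurable fun p : (Fin k → ℝ) × ℝ => π p.1 p.2)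
    (hπpos : ∃ c : ℝ, 0 < c ∧ ∀ x d, c ≤ π x d)
    (η : ℝ) :
    (P[|{ω | R ω = 0}] {ω | V ω < η}).toReal =
      1 - γ +
        (∫ ω, ((1 - R ω) * (mC η (X ω) (D ω) - (1 - γ)) +
            (R ω / π (X ω) (D ω)) *
              ((if V ω < η then (1 : ℝ) else 0) - mC η (X ω) (D ω))) ∂P) /
          (P {ω | R ω = 0}).toReal := by
  obtain ⟨c, hc, hov⟩ := hoverlap
  obtain ⟨cπ, hcπ, hπc⟩ := hπpos
  exact aux_main P (fun ω => (X ω, D ω)) (fun ω => (Y1 ω, Y0 ω)) R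
    (hX.prodMk hD) (hY1.prodMk hY0) hR hRbin hA2 V
    (fun p => v (p.1.1, p.1.2, p.2.1, p.2.2))
    (hv.comp ((measurable_fst.fst).prodMk ((measurable_fst.snd).prodMk
      ((measurable_snd.fst).prodMk measurable_snd.snd)))) hV hpos
    (fun p => eR p.1 p.2) heRmeas heR c hc hov γ η
    (fun p => mC η p.1 p.2)
    (hmCmeas.comp (measurable_const.prodMk measurable_id))
    (fun p => hmCbdd η p.1 p.2) (hmC η)
    (fun p => π p.1 p.2) hπmeas cπ hcπ (fun p => hπc p.1 p.2)
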